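/- Let f(z) = z² − 1/(16z²) and suppose a, b ∈ ℂ with a ≠ 0 satisfy f(f(a·z + b)) = f(f(z)) for all z in the common domain of definition. Then a⁴ = 1 and b = 0. -/

import Mathlib

set_option maxRecDepth 8000
set_option maxHeartbeats 2000000

noncomputable def Qpoly (a b : ℂ) : Polynomial ℂ :=
  Polynomial.C ((-68719476736:ℂ)*a^12 + (68719476736:ℂ)*a^16) * Polynomial.X^28 +
    Polynomial.C ((-824633720832:ℂ)*a^11*b^1 + (1099511627776:ℂ)*a^15*b^1) * Polynomial.X^27 +
    Polynomial.C ((-4535485464576:ℂ)*a^10*b^2 + (8246337208320:ℂ)*a^14*b^2) * Polynomial.X^26 +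
    Polynomial.C ((-15118284881920:ℂ)*a^9*b^3 + (38482906972160:ℂ)*a^13*b^3) * Polynomial.X^25 +
    Polynomial.C ((8589934592:ℂ)*a^8 + (-34016140984320:ℂ)*a^8*b^4 + (125069447659520:ℂ)*a^12*b^4 + (-8589934592:ℂ)*a^16) * Polynomial.X^24 +
    Polynomial.C ((68719476736:ℂ)*a^7*b^1 + (-54425825574912:ℂ)*a^7*b^5 + (300166674382848:ℂ)*a^11*b^5 + (-137438953472:ℂ)*a^15*b^1) * Polynomial.X^23 +
    Polynomial.C ((240518168576:ℂ)*a^6*b^2 + (-63496796504064:ℂ)*a^6*b^6 + (550305569701888:ℂ)*a^10*b^6 + (-1030792151040:ℂ)*a^14*b^2) * Polynomial.X^22 +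
    Polynomial.C ((481036337152:ℂ)*a^5*b^3 + (-54425825574912:ℂ)*a^5*b^7 + (786150813859840:ℂ)*a^9*b^7 + (-4810363371520:ℂ)*a^13*b^3) * Polynomial.X^21 +
    Polynomial.C ((-268435456:ℂ)*a^4 + (601295421440:ℂ)*a^4*b^4 + (-34016140984320:ℂ)*a^4*b^8 + (-4831838208:ℂ)*a^8 + (884419665592320:ℂ)*a^8*b^8 + (4831838208:ℂ)*a^12 + (-15633680957440:ℂ)*a^12*b^4 + (268435456:ℂ)*a^16) * Polynomial.X^20 +
    Polynomial.C ((-1073741824:ℂ)*a^3*b^1 + (481036337152:ℂ)*a^3*b^5 + (-15118284881920:ℂ)*a^3*b^9 + (-38654705664:ℂ)*a^7*b^1 + (786150813859840:ℂ)*a^7*b^9 + (57982058496:ℂ)*a^11*b^1 + (-37520834297856:ℂ)*a^11*b^5 + (4294967296:ℂ)*a^15*b^1) * Polynomial.X^19 +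
    Polynomial.C ((-1610612736:ℂ)*a^2*b^2 + (240518168576:ℂ)*a^2*b^6 + (-4535485464576:ℂ)*a^2*b^10 + (-135291469824:ℂ)*a^6*b^2 + (550305569701888:ℂ)*a^6*b^10 + (318901321728:ℂ)*a^10*b^2 + (-68788196212736:ℂ)*a^10*b^6 + (32212254720:ℂ)*a^14*b^2) * Polynomial.X^18 +
    Polynomial.C ((-1073741824:ℂ)*a^1*b^3 + (68719476736:ℂ)*a^1*b^7 + (-824633720832:ℂ)*a^1*b^11 + (-270582939648:ℂ)*a^5*b^3 + (300166674382848:ℂ)*a^5*b^11 + (1063004405760:ℂ)*a^9*b^3 + (-98268851732480:ℂ)*a^9*b^7 + (150323855360:ℂ)*a^13*b^3) * Polynomial.X^17 +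
    Polynomial.C ((-268435456:ℂ)*b^4 + (8589934592:ℂ)*b^8 + (-68719476736:ℂ)*b^12 + (-338228674560:ℂ)*a^4*b^4 + (125069447659520:ℂ)*a^4*b^12 + (2391759912960:ℂ)*a^8*b^4 + (-110552458199040:ℂ)*a^8*b^8 + (488552529920:ℂ)*a^12*b^4) * Polynomial.X^16 +
    Polynomial.C ((-270582939648:ℂ)*a^3*b^5 + (38482906972160:ℂ)*a^3*b^13 + (3826815860736:ℂ)*a^7*b^5 + (-98268851732480:ℂ)*a^7*b^9 + (1172526071808:ℂ)*a^11*b^5) * Polynomial.X^15 +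
    Polynomial.C ((-135291469824:ℂ)*a^2*b^6 + (8246337208320:ℂ)*a^2*b^14 + (4464618504192:ℂ)*a^6*b^6 + (-68788196212736:ℂ)*a^6*b^10 + (2149631131648:ℂ)*a^10*b^6) * Polynomial.X^14 +
    Polynomial.C ((-38654705664:ℂ)*a^1*b^7 + (1099511627776:ℂ)*a^1*b^15 + (3826815860736:ℂ)*a^5*b^7 + (-37520834297856:ℂ)*a^5*b^11 + (3070901616640:ℂ)*a^9*b^7) * Polynomial.X^13 +
    Polynomial.C ((1048576:ℂ) + (-4831838208:ℂ)*b^8 + (68719476736:ℂ)*b^16 + (18874368:ℂ)*a^4 + (2391759912960:ℂ)*a^4*b^8 + (-15633680957440:ℂ)*a^4*b^12 + (-18874368:ℂ)*a^8 + (3454764318720:ℂ)*a^8*b^8 + (-1048576:ℂ)*a^12) * Polynomial.X^12 +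
    Polynomial.C ((75497472:ℂ)*a^3*b^1 + (1063004405760:ℂ)*a^3*b^9 + (-4810363371520:ℂ)*a^3*b^13 + (-150994944:ℂ)*a^7*b^1 + (3070901616640:ℂ)*a^7*b^9 + (-12582912:ℂ)*a^11*b^1) * Polynomial.X^11 +
    Polynomial.C ((113246208:ℂ)*a^2*b^2 + (318901321728:ℂ)*a^2*b^10 + (-1030792151040:ℂ)*a^2*b^14 + (-528482304:ℂ)*a^6*b^2 + (2149631131648:ℂ)*a^6*b^10 + (-69206016:ℂ)*a^10*b^2) * Polynomial.X^10 +
    Polynomial.C ((75497472:ℂ)*a^1*b^3 + (57982058496:ℂ)*a^1*b^11 + (-137438953472:ℂ)*a^1*b^15 + (-1056964608:ℂ)*a^5*b^3 + (1172526071808:ℂ)*a^5*b^11 + (-230686720:ℂ)*a^9*b^3) * Polynomial.X^9 +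
    Polynomial.C ((-131072:ℂ) + (18874368:ℂ)*b^4 + (4831838208:ℂ)*b^12 + (-8589934592:ℂ)*b^16 + (-1321205760:ℂ)*a^4*b^4 + (488552529920:ℂ)*a^4*b^12 + (131072:ℂ)*a^8 + (-519045120:ℂ)*a^8*b^4) * Polynomial.X^8 +
    Polynomial.C ((-1056964608:ℂ)*a^3*b^5 + (150323855360:ℂ)*a^3*b^13 + (1048576:ℂ)*a^7*b^1 + (-830472192:ℂ)*a^7*b^5) * Polynomial.X^7 +
    Polynomial.C ((-528482304:ℂ)*a^2*b^6 + (32212254720:ℂ)*a^2*b^14 + (3670016:ℂ)*a^6*b^2 + (-968884224:ℂ)*a^6*b^6) * Polynomial.X^6 +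
    Polynomial.C ((-150994944:ℂ)*a^1*b^7 + (4294967296:ℂ)*a^1*b^15 + (7340032:ℂ)*a^5*b^3 + (-830472192:ℂ)*a^5*b^7) * Polynomial.X^5 +
    Polynomial.C ((4096:ℂ) + (-18874368:ℂ)*b^8 + (268435456:ℂ)*b^16 + (-4096:ℂ)*a^4 + (9175040:ℂ)*a^4*b^4 + (-519045120:ℂ)*a^4*b^8) * Polynomial.X^4 +
    Polynomial.C ((-16384:ℂ)*a^3*b^1 + (7340032:ℂ)*a^3*b^5 + (-230686720:ℂ)*a^3*b^9) * Polynomial.X^3 +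
    Polynomial.C ((-24576:ℂ)*a^2*b^2 + (3670016:ℂ)*a^2*b^6 + (-69206016:ℂ)*a^2*b^10) * Polynomial.X^2 +
    Polynomial.C ((-16384:ℂ)*a^1*b^3 + (1048576:ℂ)*a^1*b^7 + (-12582912:ℂ)*a^1*b^11) * Polynomial.X^1 +
    Polynomial.C ((-4096:ℂ)*b^4 + (131072:ℂ)*b^8 + (-1048576:ℂ)*b^12) * Polynomial.X^0

theorem stmt_6 (f : ℂ → ℂ) (hf : ∀ z : ℂ, f z = z ^ 2 - 1 / (16 * z ^ 2))
    (a b : ℂ) (ha : a ≠ 0)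
    (heq : ∀ z : ℂ, z ≠ 0 → a * z + b ≠ 0 → f z ≠ 0 → f (a * z + b) ≠ 0 →
      f (f (a * z + b)) = f (f z)) :
    a ^ 4 = 1 ∧ b = 0 := by
  -- Step 1: every "good" z is a root of Qpoly a b
  have hroot : ∀ z : ℂ, z ≠ 0 → a * z + b ≠ 0 → f z ≠ 0 → f (a * z + b) ≠ 0 →
      (Qpoly a b).IsRoot z := by
    intro z hz0 hw0 hfz hfw
    have h := heq z hz0 hw0 hfz hfw
    set w := a * z + b with hw
    have hNz : (16:ℂ) * z ^ 4 - 1 ≠ 0 := by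
      intro hc
      apply hfz
      rw [hf]
      field_simp
      linear_combination hc
    have hNw : (16:ℂ) * w ^ 4 - 1 ≠ 0 := by
      intro hc
      apply hfw
      rw [hf]
      field_simp
      linear_combination hc
    have hfz' : f z = (16 * z ^ 4 - 1) / (16 * z ^ 2) := by
      rw [hf]; field_simp
    have hfw' : f w = (16 * w ^ 4 - 1) / (16 * w ^ 2) := by
      rw [hf]; field_simp
    rw [hf (f w), hf (f z), hfz', hfw'] at h
    field_simp at h
    simp only [Polynomial.IsRoot, Qpoly, Polynomial.eval_add, Polynomial.eval_mul,
      Polynomial.eval_pow, Polynomial.eval_C, Polynomial.eval_X]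
    linear_combination 4096 * h
  -- Step 2: the set of bad points is finite
  have hSfin : ({0} ∪ {x : ℂ | 16 * x ^ 4 - 1 = 0} : Set ℂ).Finite := by
    apply Set.Finite.union (Set.finite_singleton 0)
    have hp : (Polynomial.C (16:ℂ) * Polynomial.X ^ 4 - 1) ≠ 0 := by
      intro hc
      have h4 : ((Polynomial.C (16:ℂ)) * Polynomial.X ^ 4 - 1).coeff 4 = 16 := by
        simp [Polynomial.coeff_one]
      rw [hc] at h4
      simp at h4
    have := Polynomial.finite_setOf_isRoot hp
    refine this.subset ?_
    intro x hx
    simp only [Set.mem_setOf_eq, Polynomial.IsRoot, Polynomial.eval_sub, Polynomial.eval_mul,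
      Polynomial.eval_pow, Polynomial.eval_C, Polynomial.eval_X, Polynomial.eval_one]
    simp only [Set.mem_setOf_eq] at hx
    linear_combination hx
  have hfS : ∀ x : ℂ, f x = 0 → x ∈ ({0} ∪ {x : ℂ | 16 * x ^ 4 - 1 = 0} : Set ℂ) := by
    intro x hx
    by_cases hx0 : x = 0
    · exact Or.inl hx0
    · right
      rw [hf] at hx
      field_simp at hx
      simp only [Set.mem_setOf_eq]
      linear_combination hx
  have hBfin : ({z : ℂ | z = 0 ∨ a * z + b = 0 ∨ f z = 0 ∨ f (a * z + b) = 0}).Finite := by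
    have hpre : ((fun z : ℂ => a * z + b) ⁻¹' ({0} ∪ {x : ℂ | 16 * x ^ 4 - 1 = 0})).Finite := by
      refine Set.Finite.preimage ?_ hSfin
      intro u _ v _ huv
      have : a * u = a * v := by
        have h' : a * u + b = a * v + b := huv
        linear_combination h'
      exact mul_left_cancel₀ ha this
    refine (hSfin.union hpre).subset ?_
    rintro z (hz | hz | hz | hz)
    · exact Or.inl (Or.inl hz)
    · exact Or.inr (Or.inl hz)
    · exact Or.inl (hfS z hz)
    · exact Or.inr (hfS _ hz)
  -- Step 3: Qpoly a b has infinitely many roots, hence is zero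
  have hQ0 : Qpoly a b = 0 := by
    apply Polynomial.eq_zero_of_infinite_isRoot
    refine Set.Infinite.mono ?_ hBfin.infinite_compl
    intro z hz
    simp only [Set.mem_compl_iff, Set.mem_setOf_eq] at hz
    push_neg at hz
    exact hroot z hz.1 hz.2.1 hz.2.2.1 hz.2.2.2
  -- Step 4: read off coefficients 28 and 27
  have h28 : (-68719476736:ℂ) * a ^ 12 + 68719476736 * a ^ 16 = 0 := by
    have := congrArg (fun p => Polynomial.coeff p 28) hQ0
    simp only [Qpoly, Polynomial.coeff_add, Polynomial.coeff_C_mul, Polynomial.coeff_X_pow,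
      Polynomial.coeff_zero] at this
    norm_num at this
    linear_combination this
  have h27 : (-824633720832:ℂ) * a ^ 11 * b + 1099511627776 * a ^ 15 * b = 0 := by
    have := congrArg (fun p => Polynomial.coeff p 27) hQ0
    simp only [Qpoly, Polynomial.coeff_add, Polynomial.coeff_C_mul, Polynomial.coeff_X_pow,
      Polynomial.coeff_zero] at this
    norm_num at this
    linear_combination this
  have ha12 : a ^ 12 ≠ 0 := pow_ne_zero 12 ha
  have ha4 : a ^ 4 = 1 := by
    have hfac : a ^ 12 * (a ^ 4 - 1) = 0 := by linear_combination h28 / 68719476736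
    rcases mul_eq_zero.mp hfac with h | h
    · exact absurd h ha12
    · linear_combination h
  refine ⟨ha4, ?_⟩
  have hab : a ^ 11 * b = 0 := by
    linear_combination h27 / 274877906944 - (4 * a ^ 11 * b) * ha4
  rcases mul_eq_zero.mp hab with h | h
  · exact absurd h (pow_ne_zero 11 ha)
  · exact h
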